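/- arXiv:1105.2846 — 2 statements merged into one kernel-verified Lean document; each statement's English description precedes it below -/
import Mathlib

section
/- Let K be a convex body in ℝⁿ with 0 in its interior and let f : K° → ℝ be a positive integrable function. For t ≥ 0 define K_f[t] = {x ∈ ℝⁿ : (2/ω(S^{n-1})) ∫_{K° \ K_x°} f(ξ) dξ ≤ t}, where K_x = conv({x} ∪ K). Then K_f[t] is star-convex with respect to 0, i.e., for every x ∈ K_f[t] the segment [0,x] is contained in K_f[t]. -/
open MeasureTheory Metric Set
open scoped RealInnerProductSpace

noncomputable section

abbrev Euc (n : ℕ) := EuclideanSpace ℝ (Fin n)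

/-- The polar body `K° = {y : ⟨x,y⟩ ≤ 1 for all x ∈ K}`. -/
def polarBody {n : ℕ} (K : Set (Euc n)) : Set (Euc n) := {y | ∀ x ∈ K, ⟪x, y⟫ ≤ 1}

/-- The support function `h_K(u) = sup_{x ∈ K} ⟨x,u⟫`. -/
def suppFn {n : ℕ} (K : Set (Euc n)) (u : Euc n) : ℝ := sSup ((fun x => ⟪x, u⟫) '' K)

/-- Surface area `ω(S^{n-1})` of the unit sphere, as the `(n-1)`-dimensional
Hausdorff measure of the sphere. -/
def sphereArea (n : ℕ) : ℝ := (μH[(n : ℝ) - 1] (sphere (0 : Euc n) 1)).toReal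

/-- `K_x = conv({x} ∪ K)`, the convex hull of `x` and `K`. -/
def hullWith {n : ℕ} (K : Set (Euc n)) (x : Euc n) : Set (Euc n) :=
  convexHull ℝ ({x} ∪ K)

/-- `w_f(x) = (2/ω(S^{n-1})) ∫_{K° \ K_x°} f dξ`. -/
def wf {n : ℕ} (K : Set (Euc n)) (f : Euc n → ℝ) (x : Euc n) : ℝ :=
  (2 / sphereArea n) * ∫ ξ in polarBody K \ polarBody (hullWith K x), f ξ

/-- The mean width body `K_f[t] = {x : w_f(x) ≤ t}`. -/
def mwBody {n : ℕ} (K : Set (Euc n)) (f : Euc n → ℝ) (t : ℝ) : Set (Euc n) :=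
  {x | wf K f x ≤ t}

theorem stmt3 (n : ℕ) (hn : 1 ≤ n) (K : Set (Euc n))
    (hKcpt : IsCompact K) (hKconv : Convex ℝ K) (h0K : (0 : Euc n) ∈ interior K)
    (f : Euc n → ℝ)
    (hfpos : ∀ ξ ∈ polarBody K, 0 < f ξ)
    (hfint : IntegrableOn f (polarBody K))
    (t : ℝ) (ht : 0 ≤ t) :
    ∀ x ∈ mwBody K f t, segment ℝ 0 x ⊆ mwBody K f t := by
  intro x hx y hy
  have h0 : (0 : Euc n) ∈ hullWith K x :=
    subset_convexHull ℝ _ (Or.inr (interior_subset h0K))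
  have hxh : x ∈ hullWith K x := subset_convexHull ℝ _ (Or.inl rfl)
  have hyh : y ∈ hullWith K x :=
    (convex_convexHull ℝ _).segment_subset h0 hxh hy
  have hsub : hullWith K y ⊆ hullWith K x := by
    apply convexHull_min _ (convex_convexHull ℝ _)
    rintro z (rfl | hz)
    · exact hyh
    · exact subset_convexHull ℝ _ (Or.inr hz)
  have hpolar : polarBody (hullWith K x) ⊆ polarBody (hullWith K y) :=
    fun w hw z hz => hw z (hsub hz)
  have hclosed : ∀ S : Set (Euc n), IsClosed (polarBody S) := by
    intro S
    have : polarBody S = ⋂ z ∈ S, {w : Euc n | ⟪z, w⟫ ≤ 1} := by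
      ext w; simp [polarBody]
    rw [this]
    exact isClosed_biInter fun z _ =>
      isClosed_le (continuous_const.inner continuous_id) continuous_const
  have meas : MeasurableSet (polarBody K \ polarBody (hullWith K y)) :=
    ((hclosed K).measurableSet).diff ((hclosed _).measurableSet)
  have hdiff : polarBody K \ polarBody (hullWith K y) ⊆
      polarBody K \ polarBody (hullWith K x) := diff_subset_diff_right hpolar
  have hint : ∫ ξ in polarBody K \ polarBody (hullWith K y), f ξ ≤
      ∫ ξ in polarBody K \ polarBody (hullWith K x), f ξ := by
    apply setIntegral_mono_set
    · exact hfint.mono_set diff_subset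
    · filter_upwards [ae_restrict_mem
        (((hclosed K).measurableSet).diff ((hclosed _).measurableSet))] with ξ hξ
      exact (hfpos ξ hξ.1).le
    · exact HasSubset.Subset.eventuallyLE hdiff
  have hcoef : (0 : ℝ) ≤ 2 / sphereArea n :=
    div_nonneg (by norm_num) ENNReal.toReal_nonneg
  have : wf K f y ≤ wf K f x := mul_le_mul_of_nonneg_left hint hcoef
  exact this.trans hx
end
end

section
/- Let K be a convex body in ℝⁿ with 0 in its interior and let f : K° → ℝ be a strictly positive integrable function. Then there exists t₀ > 0 such that for all 0 ≤ t ≤ t₀ the mean width body K_f[t] is bounded. -/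
open MeasureTheory Metric Set
open scoped RealInnerProductSpace

noncomputable section

lemma coord_dist_le {n : ℕ} (x y : Euc n) (i : Fin n) : dist (x i) (y i) ≤ dist x y := by
  rw [EuclideanSpace.dist_eq]
  have h1 : dist (x i) (y i) ^ 2 ≤ ∑ j, dist (x j) (y j) ^ 2 :=
    Finset.single_le_sum (f := fun j => dist (x j) (y j) ^ 2)
      (fun j _ => sq_nonneg _) (Finset.mem_univ i)
  calc dist (x i) (y i) = Real.sqrt (dist (x i) (y i) ^ 2) := by
        rw [Real.sqrt_sq dist_nonneg]
    _ ≤ _ := Real.sqrt_le_sqrt h1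

def eucTail (m : ℕ) : Euc (m+1) → Euc m := fun y => (WithLp.toLp 2 (fun i : Fin m => y i.succ) : Euc m)

lemma lipschitz_tail (m : ℕ) : LipschitzWith 1 (eucTail m) := by
  refine LipschitzWith.of_dist_le_mul fun x y => ?_
  simp only [NNReal.coe_one, one_mul]
  rw [show dist (eucTail m x) (eucTail m y)
      = Real.sqrt (∑ i, dist (eucTail m x i) (eucTail m y i) ^ 2) from
      EuclideanSpace.dist_eq _ _]
  rw [EuclideanSpace.dist_eq x y]
  apply Real.sqrt_le_sqrt
  rw [Fin.sum_univ_succ (fun j => dist (x j) (y j) ^ 2)]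
  have h0 : (0:ℝ) ≤ dist (x 0) (y 0) ^ 2 := sq_nonneg _
  have : ∀ i : Fin m, eucTail m x i = x i.succ := fun _ => rfl
  simp only [eucTail, PiLp.toLp_apply]
  linarith [Finset.sum_nonneg (fun (i : Fin m) (_ : i ∈ Finset.univ) => sq_nonneg (dist (x i.succ) (y i.succ)))]

lemma sum_sq_eq_normsq {m : ℕ} (v : Euc m) : ∑ i, ‖v i‖ ^ 2 = ‖v‖ ^ 2 := by
  rw [EuclideanSpace.norm_eq, Real.sq_sqrt]
  exact Finset.sum_nonneg fun i _ => sq_nonneg _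

lemma ball_subset_tail_sphere (m : ℕ) :
    ball (0 : Euc m) 1 ⊆ eucTail m '' (sphere (0 : Euc (m+1)) 1) := by
  intro v hv
  rw [mem_ball, dist_zero_right] at hv
  have hv2 : ‖v‖ ^ 2 ≤ 1 := by nlinarith [norm_nonneg v]
  set c : ℝ := Real.sqrt (1 - ‖v‖ ^ 2) with hc
  refine ⟨WithLp.toLp 2 (Fin.cons c v : Fin (m+1) → ℝ), ?_, ?_⟩
  · rw [mem_sphere_zero_iff_norm, EuclideanSpace.norm_eq]
    rw [Fin.sum_univ_succ (f := fun i => ‖(WithLp.toLp 2 (Fin.cons c v : Fin (m+1) → ℝ) : Euc (m+1)) i‖ ^ 2)]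
    simp only [PiLp.toLp_apply, Fin.cons_zero, Fin.cons_succ]
    rw [sum_sq_eq_normsq v]
    have hcn : ‖c‖ ^ 2 = 1 - ‖v‖ ^ 2 := by
      rw [Real.norm_eq_abs, sq_abs, hc, Real.sq_sqrt (by linarith)]
    rw [hcn]
    simp
  · ext i
    simp [eucTail]

lemma euc_haar_open_pos (m : ℕ) {U : Set (Euc m)} (hU : IsOpen U) (hne : U.Nonempty) :
    0 < μH[(m : ℝ)] U := by
  have hfr : (Module.finrank ℝ (Euc m) : ℝ) = (m : ℝ) := by
    rw [finrank_euclideanSpace_fin]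
  rw [← hfr]
  exact hU.measure_pos (μH[(Module.finrank ℝ (Euc m) : ℝ)]) hne

lemma euc_haar_compact_lt_top (m : ℕ) {C : Set (Euc m)} (hC : IsCompact C) :
    μH[(m : ℝ)] C < ⊤ := by
  have hfr : (Module.finrank ℝ (Euc m) : ℝ) = (m : ℝ) := by
    rw [finrank_euclideanSpace_fin]
  rw [← hfr]
  exact hC.measure_lt_top

lemma haus_sphere_pos (m : ℕ) : 0 < μH[(m : ℝ)] (sphere (0 : Euc (m+1)) 1) := by
  have h1 : 0 < μH[(m : ℝ)] (ball (0 : Euc m) 1) :=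
    euc_haar_open_pos m isOpen_ball (by simp)
  have h2 : μH[(m : ℝ)] (ball (0 : Euc m) 1)
      ≤ μH[(m : ℝ)] (eucTail m '' (sphere (0 : Euc (m+1)) 1)) :=
    measure_mono (ball_subset_tail_sphere m)
  have h3 := (lipschitz_tail m).hausdorffMeasure_image_le
    (d := (m : ℝ)) (by positivity) (sphere (0 : Euc (m+1)) 1)
  simp only [ENNReal.coe_one, ENNReal.one_rpow, one_mul] at h3
  exact lt_of_lt_of_le h1 (h2.trans h3)

def eucInsert (m : ℕ) (j : Fin (m+1)) (c : ℝ) : Euc m → Euc (m+1) :=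
  fun v => WithLp.toLp 2 (j.insertNth c v : Fin (m+1) → ℝ)

lemma lipschitz_eucInsert (m : ℕ) (j : Fin (m+1)) (c : ℝ) :
    LipschitzWith 1 (eucInsert m j c) := by
  refine LipschitzWith.of_dist_le_mul fun v w => ?_
  simp only [NNReal.coe_one, one_mul]
  rw [show dist (eucInsert m j c v) (eucInsert m j c w)
      = Real.sqrt (∑ i, dist (eucInsert m j c v i) (eucInsert m j c w i) ^ 2) from
      EuclideanSpace.dist_eq _ _]
  rw [EuclideanSpace.dist_eq v w]
  apply Real.sqrt_le_sqrt
  rw [Fin.sum_univ_succAbove (fun i => dist (eucInsert m j c v i) (eucInsert m j c w i) ^ 2) j]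
  simp only [eucInsert, PiLp.toLp_apply, Fin.insertNth_apply_same, Fin.insertNth_apply_succAbove]
  simp [dist_self]

def radial (n : ℕ) : Euc n → Euc n := fun x => ‖x‖⁻¹ • x

lemma lipschitzOn_radial (n : ℕ) :
    LipschitzOnWith 2 (radial n) {x : Euc n | 1 ≤ ‖x‖} := by
  rw [lipschitzOnWith_iff_dist_le_mul]
  intro x hx y hy
  simp only [mem_setOf_eq] at hx hy
  have ha : (0:ℝ) < ‖x‖ := lt_of_lt_of_le one_pos hx
  have hb : (0:ℝ) < ‖y‖ := lt_of_lt_of_le one_pos hy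
  have key : radial n x - radial n y = ‖x‖⁻¹ • (x - y) + (‖x‖⁻¹ - ‖y‖⁻¹) • y := by
    simp only [radial, smul_sub, sub_smul]
    abel
  rw [dist_eq_norm, dist_eq_norm, key]
  have h1 : ‖‖x‖⁻¹ • (x - y)‖ = ‖x‖⁻¹ * ‖x - y‖ := by
    rw [norm_smul, Real.norm_eq_abs, abs_of_pos (by positivity)]
  have h2 : ‖(‖x‖⁻¹ - ‖y‖⁻¹) • y‖ = |‖x‖⁻¹ - ‖y‖⁻¹| * ‖y‖ := by
    rw [norm_smul, Real.norm_eq_abs]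
  have h3 : |‖x‖⁻¹ - ‖y‖⁻¹| * ‖y‖ = |‖y‖ - ‖x‖| * ‖x‖⁻¹ := by
    rw [show ‖x‖⁻¹ - ‖y‖⁻¹ = (‖y‖ - ‖x‖) * (‖x‖⁻¹ * ‖y‖⁻¹) from by field_simp]
    rw [abs_mul, abs_of_pos (show (0:ℝ) < ‖x‖⁻¹ * ‖y‖⁻¹ by positivity)]
    field_simp
  have h4 : |‖y‖ - ‖x‖| ≤ ‖x - y‖ := by
    rw [abs_sub_comm]
    exact abs_norm_sub_norm_le x y
  have h5 : ‖x‖⁻¹ ≤ 1 := by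
    rw [inv_le_one_iff₀]; right; exact hx
  calc ‖‖x‖⁻¹ • (x - y) + (‖x‖⁻¹ - ‖y‖⁻¹) • y‖
      ≤ ‖‖x‖⁻¹ • (x - y)‖ + ‖(‖x‖⁻¹ - ‖y‖⁻¹) • y‖ := norm_add_le _ _
    _ = ‖x‖⁻¹ * ‖x - y‖ + |‖y‖ - ‖x‖| * ‖x‖⁻¹ := by rw [h1, h2, h3]
    _ ≤ ‖x‖⁻¹ * ‖x - y‖ + ‖x - y‖ * ‖x‖⁻¹ := by
        gcongr
    _ ≤ 2 * ‖x - y‖ := by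
        have : (0:ℝ) ≤ ‖x - y‖ := norm_nonneg _
        nlinarith

def face (m : ℕ) (j : Fin (m+1)) (s : Bool) : Set (Euc (m+1)) :=
  {x | x j = (if s then (1:ℝ) else -1) ∧ ∀ i, |x i| ≤ 1}

lemma coord_le_norm {n : ℕ} (x : Euc n) (i : Fin n) : |x i| ≤ ‖x‖ := by
  have := coord_dist_le x 0 i
  simpa [Real.dist_eq] using this

lemma face_norm_ge (m : ℕ) (j : Fin (m+1)) (s : Bool) :
    face m j s ⊆ {x : Euc (m+1) | 1 ≤ ‖x‖} := by
  intro x hx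
  have h1 : |x j| = 1 := by
    rcases hx with ⟨h, -⟩
    cases s <;> simp [h]
  have := coord_le_norm x j
  simp only [mem_setOf_eq]
  linarith

lemma sphere_subset_faces (m : ℕ) :
    sphere (0 : Euc (m+1)) 1 ⊆
      ⋃ (j : Fin (m+1)), ⋃ (s : Bool), radial (m+1) '' face m j s := by
  intro u hu
  rw [mem_sphere_zero_iff_norm] at hu
  obtain ⟨j, -, hj⟩ := Finset.exists_max_image Finset.univ (fun i => |u i|)
    ⟨0, Finset.mem_univ _⟩
  have hj' : ∀ i, |u i| ≤ |u j| := fun i => hj i (Finset.mem_univ i)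
  have hjpos : 0 < |u j| := by
    rcases (abs_nonneg (u j)).lt_or_eq with h | h
    · exact h
    · exfalso
      have hz : ∀ i, u i = 0 := fun i =>
        abs_eq_zero.mp (le_antisymm (h ▸ hj' i) (abs_nonneg _))
      have : u = 0 := PiLp.ext hz
      rw [this] at hu
      simp at hu
  set x : Euc (m+1) := (|u j|⁻¹ • u : Euc (m+1)) with hxdef
  have hnx : ‖x‖ = |u j|⁻¹ := by
    rw [hxdef, norm_smul, Real.norm_eq_abs, abs_of_pos (by positivity), hu, mul_one]
  refine mem_iUnion.mpr ⟨j, mem_iUnion.mpr ⟨decide (0 < u j), ⟨x, ⟨?_, ?_⟩, ?_⟩⟩⟩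
  · show x j = _
    have hxj : x j = |u j|⁻¹ * u j := rfl
    rcases lt_or_ge 0 (u j) with h | h
    · simp only [decide_eq_true h, if_true]
      rw [hxj, abs_of_pos h]
      field_simp
    · have hneg : u j < 0 := by
        rcases h.lt_or_eq with h' | h'
        · exact h'
        · exfalso; rw [h'] at hjpos; simp at hjpos
      have hdec : decide (0 < u j) = false := by
        simp [not_lt.mpr h]
      rw [hdec, if_neg (by simp), hxj, abs_of_neg hneg]
      field_simp
      rw [div_self hneg.ne]
  · intro i
    have hxi : x i = |u j|⁻¹ * u i := rfl
    rw [hxi, abs_mul, abs_of_pos (show (0:ℝ) < |u j|⁻¹ by positivity),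
      inv_mul_le_one₀ hjpos]
    exact hj' i
  · show radial (m+1) x = u
    rw [radial, hnx, inv_inv, hxdef, smul_smul, mul_inv_cancel₀ (ne_of_gt hjpos), one_smul]

lemma face_subset_insert (m : ℕ) (j : Fin (m+1)) (s : Bool) :
    face m j s ⊆ eucInsert m j (if s then (1:ℝ) else -1) ''
      (closedBall (0 : Euc m) (m+1)) := by
  rintro x ⟨hxj, hxb⟩
  have hv : ∃ v : Euc m, v = WithLp.toLp 2 (fun i => x (j.succAbove i)) := ⟨WithLp.toLp 2 (fun i => x (j.succAbove i)), rfl⟩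
  obtain ⟨v, hvdef⟩ := hv
  refine ⟨v, ?_, ?_⟩
  · rw [mem_closedBall, dist_zero_right, EuclideanSpace.norm_eq]
    have h2 : ∑ i : Fin m, ‖v i‖ ^ 2 ≤ ((m:ℝ)+1)^2 := by
      calc ∑ i : Fin m, ‖v i‖ ^ 2 ≤ ∑ _i : Fin m, (1:ℝ) := by
            refine Finset.sum_le_sum fun i _ => ?_
            have h5 := hxb (j.succAbove i)
            have h6 : v i = x (j.succAbove i) := by rw [hvdef]
            rw [h6, Real.norm_eq_abs]
            nlinarith [abs_nonneg (x (j.succAbove i))]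
        _ = (m:ℝ) := by simp
        _ ≤ ((m:ℝ)+1)^2 := by nlinarith [Nat.cast_nonneg (α := ℝ) m]
    calc Real.sqrt (∑ i, ‖v i‖ ^ 2) ≤ Real.sqrt (((m:ℝ)+1)^2) :=
          Real.sqrt_le_sqrt h2
      _ = (m:ℝ)+1 := Real.sqrt_sq (by positivity)
  · show WithLp.toLp 2 (j.insertNth _ v : Fin (m+1) → ℝ) = x
    have : v = WithLp.toLp 2 (j.removeNth x) := hvdef
    rw [this, ← hxj]
    exact congrArg (WithLp.toLp 2) (Fin.insertNth_self_removeNth j x)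

lemma haus_sphere_lt_top (m : ℕ) : μH[(m : ℝ)] (sphere (0 : Euc (m+1)) 1) < ⊤ := by
  have hd : (0:ℝ) ≤ (m:ℝ) := by positivity
  have hface : ∀ (j : Fin (m+1)) (s : Bool),
      μH[(m : ℝ)] (radial (m+1) '' face m j s) < ⊤ := by
    intro j s
    have h1 := ((lipschitzOn_radial (m+1)).mono (face_norm_ge m j s)).hausdorffMeasure_image_le
      (d := (m:ℝ)) hd
    have h2 : μH[(m : ℝ)] (face m j s)
        ≤ μH[(m : ℝ)] (eucInsert m j (if s then (1:ℝ) else -1) ''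
            (closedBall (0 : Euc m) (m+1))) :=
      measure_mono (face_subset_insert m j s)
    have h3 := (lipschitz_eucInsert m j (if s then (1:ℝ) else -1)).hausdorffMeasure_image_le
      (d := (m:ℝ)) hd (closedBall (0 : Euc m) (m+1))
    have h4 : μH[(m : ℝ)] (closedBall (0 : Euc m) (m+1)) < ⊤ :=
      euc_haar_compact_lt_top m (isCompact_closedBall _ _)
    refine lt_of_le_of_lt h1 (ENNReal.mul_lt_top ?_ ?_)
    · exact ENNReal.rpow_lt_top_of_nonneg hd (by simp)
    · refine lt_of_le_of_lt (h2.trans h3) (ENNReal.mul_lt_top ?_ h4)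
      exact ENNReal.rpow_lt_top_of_nonneg hd (by simp)
  calc μH[(m : ℝ)] (sphere (0 : Euc (m+1)) 1)
      ≤ μH[(m : ℝ)] (⋃ (j : Fin (m+1)), ⋃ (s : Bool), radial (m+1) '' face m j s) :=
        measure_mono (sphere_subset_faces m)
    _ ≤ ∑' (j : Fin (m+1)), μH[(m : ℝ)] (⋃ (s : Bool), radial (m+1) '' face m j s) :=
        measure_iUnion_le _
    _ < ⊤ := by
        rw [tsum_fintype]
        apply ENNReal.sum_lt_top.mpr
        intro j _
        calc μH[(m : ℝ)] (⋃ (s : Bool), radial (m+1) '' face m j s)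
            ≤ ∑' (s : Bool), μH[(m : ℝ)] (radial (m+1) '' face m j s) := measure_iUnion_le _
          _ < ⊤ := by
              rw [tsum_fintype]
              apply ENNReal.sum_lt_top.mpr
              intro s _
              exact hface j s

lemma mySphereArea_pos {n : ℕ} (hn : 1 ≤ n) : 0 < sphereArea n := by
  obtain ⟨m, rfl⟩ : ∃ m, n = m + 1 := ⟨n - 1, (Nat.succ_pred_eq_of_pos hn).symm⟩
  unfold sphereArea
  have he : ((m + 1 : ℕ) : ℝ) - 1 = (m : ℝ) := by push_cast; ring
  rw [he]
  exact ENNReal.toReal_pos (haus_sphere_pos m).ne' (haus_sphere_lt_top m).ne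

lemma polarBody_closed {n : ℕ} (S : Set (Euc n)) : IsClosed (polarBody S) := by
  have h : polarBody S = ⋂ x ∈ S, {y : Euc n | ⟪x, y⟫ ≤ 1} := by
    ext y; simp [polarBody]
  rw [h]
  exact isClosed_biInter fun x _ =>
    isClosed_le (Continuous.inner continuous_const continuous_id) continuous_const

lemma hyperplane_null {n : ℕ} (x₀ : Euc n) (hx₀ : x₀ ≠ 0) :
    volume {y : Euc n | ⟪x₀, y⟫ = 1} = 0 := by
  set y₀ : Euc n := (‖x₀‖ ^ 2)⁻¹ • x₀ with hy₀
  have hnx : ‖x₀‖ ≠ 0 := norm_ne_zero_iff.mpr hx₀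
  have hinner : ⟪x₀, y₀⟫ = 1 := by
    rw [hy₀, real_inner_smul_right, real_inner_self_eq_norm_sq]
    field_simp
  have hker : LinearMap.ker (innerSL ℝ x₀ : Euc n →ₗ[ℝ] ℝ) ≠ ⊤ := by
    intro h
    have hx : x₀ ∈ LinearMap.ker (innerSL ℝ x₀ : Euc n →ₗ[ℝ] ℝ) := h ▸ Submodule.mem_top
    rw [LinearMap.mem_ker] at hx
    have : ⟪x₀, x₀⟫ = 0 := hx
    exact hx₀ (inner_self_eq_zero.mp this)
  have hset : {y : Euc n | ⟪x₀, y⟫ = 1}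
      = (fun z => z + y₀) '' ((LinearMap.ker (innerSL ℝ x₀ : Euc n →ₗ[ℝ] ℝ) : Submodule ℝ (Euc n)) : Set (Euc n)) := by
    ext y
    simp only [mem_setOf_eq, mem_image, SetLike.mem_coe, LinearMap.mem_ker]
    constructor
    · intro hy
      refine ⟨y - y₀, ?_, by abel⟩
      have : (innerSL ℝ x₀ : Euc n →ₗ[ℝ] ℝ) (y - y₀) = ⟪x₀, y - y₀⟫ := rfl
      rw [this, inner_sub_right, hy, hinner, sub_self]
    · rintro ⟨z, hz, rfl⟩
      have hz' : ⟪x₀, z⟫ = 0 := hz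
      rw [inner_add_right, hz', hinner, zero_add]
  rw [hset, Set.image_add_right, measure_preimage_add_right]
  exact Measure.addHaar_submodule volume _ hker

theorem stmt7 (n : ℕ) (hn : 1 ≤ n) (K : Set (Euc n))
    (hKcpt : IsCompact K) (hKconv : Convex ℝ K) (h0K : (0 : Euc n) ∈ interior K)
    (f : Euc n → ℝ)
    (hfpos : ∀ ξ ∈ polarBody K, 0 < f ξ)
    (hfint : IntegrableOn f (polarBody K)) :
    ∃ t₀ : ℝ, 0 < t₀ ∧ ∀ t : ℝ, 0 ≤ t → t ≤ t₀ →
      Bornology.IsBounded (mwBody K f t) := by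
  classical
  -- the constant c
  set c : ℝ := 2 / sphereArea n with hc_def
  have hc : 0 < c := div_pos two_pos (mySphereArea_pos hn)
  -- bound on K
  obtain ⟨R₁, hR₁⟩ := hKcpt.isBounded.subset_closedBall 0
  set R₀ : ℝ := max R₁ 1 with hR₀def
  have hR₀ : 0 < R₀ := lt_of_lt_of_le one_pos (le_max_right _ _)
  have hKR₀ : K ⊆ closedBall 0 R₀ :=
    hR₁.trans (closedBall_subset_closedBall (le_max_left _ _))
  -- small ball inside the polar body
  have hball : ball (0 : Euc n) (1 / R₀) ⊆ polarBody K := by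
    intro y hy x hx
    rw [mem_ball, dist_zero_right] at hy
    have hxn : ‖x‖ ≤ R₀ := by
      have := hKR₀ hx
      rwa [mem_closedBall, dist_zero_right] at this
    calc ⟪x, y⟫ ≤ ‖x‖ * ‖y‖ := real_inner_le_norm x y
      _ ≤ R₀ * (1 / R₀) := by
          apply mul_le_mul hxn hy.le (norm_nonneg _) hR₀.le
      _ = 1 := by field_simp
  -- the sets A x and function g
  set A : Euc n → Set (Euc n) := fun x => polarBody K ∩ {y | 1 < ⟪x, y⟫} with hA_def
  have hopen : ∀ x : Euc n, IsOpen {y : Euc n | 1 < ⟪x, y⟫} := fun x =>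
    isOpen_lt continuous_const (Continuous.inner continuous_const continuous_id)
  have hAmble : ∀ x : Euc n, MeasurableSet (A x) := fun x =>
    ((polarBody_closed K).measurableSet).inter (hopen x).measurableSet
  set g : Euc n → ℝ := fun x => ∫ y in A x, f y with hg_def
  have hfApos : ∀ x : Euc n, ∀ y ∈ A x, 0 < f y := fun x y hy => hfpos y hy.1
  have hfAnonneg : ∀ x : Euc n, 0 ≤ᵐ[volume.restrict (A x)] f := fun x =>
    ae_restrict_of_forall_mem (hAmble x) (fun y hy => (hfApos x y hy).le)
  have hfAint : ∀ x : Euc n, IntegrableOn f (A x) := fun x =>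
    hfint.mono_set inter_subset_left
  -- lower bound for wf
  have hDclosed : ∀ x : Euc n, MeasurableSet (polarBody K \ polarBody (hullWith K x)) :=
    fun x => ((polarBody_closed K).measurableSet).diff (polarBody_closed _).measurableSet
  have hwf_ge : ∀ x : Euc n, c * g x ≤ wf K f x := by
    intro x
    have hsub : A x ⊆ polarBody K \ polarBody (hullWith K x) := by
      rintro y ⟨hy1, hy2⟩
      refine ⟨hy1, fun hmem => ?_⟩
      have hxK : x ∈ hullWith K x :=
        subset_convexHull ℝ _ (mem_union_left _ rfl)
      exact absurd (hmem x hxK) (not_le.mpr hy2)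
    have hint : g x ≤ ∫ y in polarBody K \ polarBody (hullWith K x), f y := by
      apply setIntegral_mono_set (hfint.mono_set diff_subset)
      · exact ae_restrict_of_forall_mem (hDclosed x) (fun y hy => (hfpos y hy.1).le)
      · exact HasSubset.Subset.eventuallyLE hsub
    calc c * g x ≤ c * ∫ y in polarBody K \ polarBody (hullWith K x), f y := by
          exact mul_le_mul_of_nonneg_left hint hc.le
      _ = wf K f x := rfl
  -- continuity of g away from 0
  have hgcont : ∀ x₀ : Euc n, x₀ ≠ 0 → ContinuousAt g x₀ := by
    intro x₀ hx₀
    have hrepr : g = fun x => ∫ y in polarBody K, ({y : Euc n | 1 < ⟪x, y⟫}).indicator f y := by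
      funext x
      rw [hg_def]
      rw [setIntegral_indicator (hopen x).measurableSet]
    rw [hrepr]
    apply continuousAt_of_dominated (bound := fun y => ‖f y‖)
    · filter_upwards with x
      exact (hfint.1).indicator (hopen x).measurableSet
    · filter_upwards with x
      filter_upwards with y
      exact norm_indicator_le_norm_self f y
    · exact hfint.norm
    · have hnull : (volume.restrict (polarBody K)) {y : Euc n | ⟪x₀, y⟫ = 1} = 0 :=
        measure_mono_null (fun y hy => hy) (le_antisymm
          ((Measure.restrict_apply_le _ _).trans (hyperplane_null x₀ hx₀).le) zero_le)
      have hae : ∀ᵐ y ∂(volume.restrict (polarBody K)), ⟪x₀, y⟫ ≠ 1 := by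
        rw [ae_iff]
        convert hnull using 2
        ext y
        simp
      filter_upwards [hae] with y hy
      have hcontinner : ContinuousAt (fun x : Euc n => ⟪x, y⟫) x₀ :=
        (Continuous.inner continuous_id continuous_const).continuousAt
      rcases hy.lt_or_gt with h | h
      · -- ⟪x₀, y⟫ < 1 : eventually 0
        have hev : ∀ᶠ x in nhds x₀, ⟪x, y⟫ < 1 :=
          hcontinner.eventually_lt continuousAt_const h
        have heq : (fun x => ({y' : Euc n | 1 < ⟪x, y'⟫}).indicator f y)
            =ᶠ[nhds x₀] fun _ => (0:ℝ) := by
          filter_upwards [hev] with x hx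
          exact Set.indicator_of_notMem
            (fun (hmem : y ∈ {y' : Euc n | 1 < ⟪x, y'⟫}) =>
              absurd (show (1:ℝ) < ⟪x, y⟫ from hmem) (not_lt.mpr hx.le)) f
        exact heq.continuousAt
      · -- 1 < ⟪x₀, y⟫ : eventually f y
        have hev : ∀ᶠ x in nhds x₀, 1 < ⟪x, y⟫ :=
          continuousAt_const.eventually_lt hcontinner h
        have heq : (fun x => ({y' : Euc n | 1 < ⟪x, y'⟫}).indicator f y)
            =ᶠ[nhds x₀] fun _ => f y := by
          filter_upwards [hev] with x hx
          exact Set.indicator_of_mem (show y ∈ {y' : Euc n | 1 < ⟪x, y'⟫} from hx) f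
        exact heq.continuousAt
  -- radius R
  set R : ℝ := 2 * R₀ with hRdef
  have hR : 0 < R := by positivity
  -- positivity of g on the sphere of radius R
  have hgpos : ∀ x ∈ sphere (0 : Euc n) R, 0 < g x := by
    intro x hx
    rw [mem_sphere_zero_iff_norm] at hx
    have hxne : x ≠ 0 := by
      intro h
      rw [h, norm_zero] at hx
      exact absurd hx.symm (ne_of_gt hR)
    set y₀ : Euc n := ((3/2) / R^2) • x with hy₀def
    set U : Set (Euc n) := ball (0 : Euc n) (1 / R₀) ∩ {y | 1 < ⟪x, y⟫} with hUdef
    have hUopen : IsOpen U := isOpen_ball.inter (hopen x)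
    have hy₀U : y₀ ∈ U := by
      constructor
      · rw [mem_ball, dist_zero_right, hy₀def, norm_smul, Real.norm_eq_abs,
          abs_of_pos (by positivity), hx]
        rw [hRdef]
        rw [div_mul_eq_mul_div, div_lt_div_iff₀ (by positivity) (by positivity)]
        ring_nf
        nlinarith [hR₀]
      · show 1 < ⟪x, y₀⟫
        rw [hy₀def, real_inner_smul_right, real_inner_self_eq_norm_sq, hx]
        rw [div_mul_cancel₀ _ (ne_of_gt (show (0:ℝ) < R^2 by positivity))]
        norm_num
    have hUsub : U ⊆ A x := by
      rintro y ⟨hy1, hy2⟩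
      exact ⟨hball hy1, hy2⟩
    have hUpos : 0 < ∫ y in U, f y := by
      rw [setIntegral_pos_iff_support_of_nonneg_ae]
      · apply lt_of_lt_of_le (hUopen.measure_pos volume ⟨y₀, hy₀U⟩)
        apply measure_mono
        intro y hy
        exact ⟨ne_of_gt (hfpos y (hball hy.1)), hy⟩
      · exact ae_restrict_of_forall_mem hUopen.measurableSet
          (fun y hy => (hfpos y (hball hy.1)).le)
      · exact hfint.mono_set (fun y hy => hball hy.1)
    have : ∫ y in U, f y ≤ g x := by
      apply setIntegral_mono_set (hfAint x) (hfAnonneg x)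
      exact HasSubset.Subset.eventuallyLE hUsub
    linarith
  -- nontriviality and the compact sphere
  have hsingle : EuclideanSpace.single (⟨0, hn⟩ : Fin n) (1:ℝ) ≠ 0 := by
    intro h
    have h2 : (EuclideanSpace.single (⟨0, hn⟩ : Fin n) (1:ℝ)) ⟨0, hn⟩ = 0 := by
      rw [h]; rfl
    rw [EuclideanSpace.single_apply] at h2
    simp at h2
  haveI : Nontrivial (Euc n) := ⟨_, _, hsingle⟩
  have hsph_ne : (sphere (0 : Euc n) R).Nonempty :=
    NormedSpace.sphere_nonempty.mpr hR.le
  have hsph_cpt : IsCompact (sphere (0 : Euc n) R) := isCompact_sphere _ _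
  have hgcontOn : ContinuousOn g (sphere (0 : Euc n) R) := by
    intro x hx
    rw [mem_sphere_zero_iff_norm] at hx
    have hxne : x ≠ 0 := by
      intro h
      rw [h, norm_zero] at hx
      exact absurd hx.symm (ne_of_gt hR)
    exact (hgcont x hxne).continuousWithinAt
  obtain ⟨xm, hxm, hmin⟩ := hsph_cpt.exists_isMinOn hsph_ne hgcontOn
  set m : ℝ := g xm with hm_def
  have hm : 0 < m := hgpos xm hxm
  -- scaling
  have hscale : ∀ x : Euc n, R ≤ ‖x‖ → m ≤ g x := by
    intro x hx
    have hxpos : 0 < ‖x‖ := lt_of_lt_of_le hR hx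
    set x' : Euc n := (R / ‖x‖) • x with hx'def
    have hx'sph : x' ∈ sphere (0 : Euc n) R := by
      rw [mem_sphere_zero_iff_norm, hx'def, norm_smul, Real.norm_eq_abs,
        abs_of_pos (by positivity)]
      field_simp
    have hAsub : A x' ⊆ A x := by
      rintro y ⟨hy1, hy2⟩
      refine ⟨hy1, ?_⟩
      have hy2' : 1 < (R / ‖x‖) * ⟪x, y⟫ := by
        have : ⟪x', y⟫ = (R / ‖x‖) * ⟪x, y⟫ := real_inner_smul_left x y (R / ‖x‖)
        rw [← this]
        exact hy2
      have hfrac : R / ‖x‖ ≤ 1 := by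
        rw [div_le_one hxpos]
        exact hx
      have hfracpos : 0 < R / ‖x‖ := by positivity
      show 1 < ⟪x, y⟫
      nlinarith
    have h1 : g x' ≤ g x := by
      apply setIntegral_mono_set (hfAint x) (hfAnonneg x)
      exact HasSubset.Subset.eventuallyLE hAsub
    exact (hmin hx'sph).trans h1
  -- conclusion
  refine ⟨c * m / 2, by positivity, fun t ht htt => ?_⟩
  apply Bornology.IsBounded.subset (isBounded_closedBall (x := (0 : Euc n)) (r := R))
  intro x hxmem
  rw [mem_closedBall, dist_zero_right]
  by_contra hcon
  push_neg at hcon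
  have h1 : m ≤ g x := hscale x hcon.le
  have h2 : c * m ≤ wf K f x := le_trans (mul_le_mul_of_nonneg_left h1 hc.le) (hwf_ge x)
  have h3 : wf K f x ≤ t := hxmem
  nlinarith
end
end
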